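/- arXiv:2411.16612 — 2 statements merged into one kernel-verified Lean document; each statement's English description precedes it below -/
import Mathlib

section
/- Encoding atomic blocks by critical sections preserves runs: for any consistent interleaving i of a program P with atomic blocks, there exists a consistent interleaving i' of split(P) — where each access to a global g is wrapped in lock(m_g)/unlock(m_g) and each atomic block is wrapped in locks of all m_g for globals g it accesses, taken in a fixed total order — such that after erasing the inserted lock/unlock steps and the mutexes m_g from states, i' yields an interleaving whose state at every index agrees with that of i on globals, mutex owners, and local states of all threads. -/
namespace CW

/-- Thread ids are finite sequences of naturals (creation histories). -/
abbrev TID := List Nat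

/-- Actions of the core language `Lang`. -/
inductive Act (Mutex Global L V : Type) : Type where
  | lock (m : Mutex)
  | unlock (m : Mutex)
  | create (tmpl : Nat)
  | localUpd (f : L → L)
  | read (g : Global) (f : L → V → L)
  | write (g : Global) (f : L → V)
  | assert (p : L → Bool)
  | pos (c : L → Bool)
  | neg (c : L → Bool)

/-- A program: thread templates (numbered CFGs, template 0 is `main`),
    start nodes, initial local state and initial values of globals. -/
structure Prog (Node Mutex Global L V : Type) where
  edges : Nat → Node → Act Mutex Global L V → Node → Prop
  start : Nat → Node
  initLocal : L
  initGlobal : Global → V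

/-- A configuration `(L, M, G)`: thread map (template, node, local state, create counter),
    mutex ownership map, and values of globals. -/
structure Config (Node Mutex Global L V : Type) where
  threads : TID → Option (Nat × Node × L × Nat)
  mutexes : Mutex → Option TID
  globals : Global → V

variable {Node Mutex Global L V : Type}

/-- The canonical initial configuration. -/
def initConfig (P : Prog Node Mutex Global L V) : Config Node Mutex Global L V where
  threads := fun t => if t = ([] : TID) then some (0, P.start 0, P.initLocal, 0) else none
  mutexes := fun _ => none
  globals := P.initGlobal

/-- The initial-state condition: only the initial thread exists, at the start node of main
    with the initial local state, no mutex held, globals at declared initial values. -/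
def IsInitGen (startF : Nat → Node) (l0 : L) (g0 : Global → V)
    (c : Config Node Mutex Global L V) : Prop :=
  (∀ t : TID, c.threads t = if t = ([] : TID) then some (0, startF 0, l0, 0) else none) ∧
  (∀ m, c.mutexes m = none) ∧ (∀ g, c.globals g = g0 g)

def IsInit (P : Prog Node Mutex Global L V) (c : Config Node Mutex Global L V) : Prop :=
  IsInitGen P.start P.initLocal P.initGlobal c

/-- Admissibility of an action for a thread with local state `l` and create counter `cnt`. -/
def admissibleAct (c : Config Node Mutex Global L V) (t : TID) (l : L) (cnt : Nat) :
    Act Mutex Global L V → Prop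
  | .lock m => c.mutexes m = none
  | .unlock m => c.mutexes m = some t
  | .create _ => c.threads (t ++ [cnt]) = none
  | .pos p => p l = true
  | .neg p => p l = false
  | _ => True

variable [DecidableEq Mutex] [DecidableEq Global]

/-- The effect of action `a` taken by thread `t` moving to node `v`. -/
def applyAct (startF : Nat → Node) (l0 : L) (c : Config Node Mutex Global L V)
    (t : TID) (tmpl : Nat) (v : Node) (l : L) (cnt : Nat) :
    Act Mutex Global L V → Config Node Mutex Global L V
  | .lock m =>
      { threads := Function.update c.threads t (some (tmpl, v, l, cnt)),
        mutexes := Function.update c.mutexes m (some t),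
        globals := c.globals }
  | .unlock m =>
      { threads := Function.update c.threads t (some (tmpl, v, l, cnt)),
        mutexes := Function.update c.mutexes m none,
        globals := c.globals }
  | .create k =>
      { threads := Function.update
          (Function.update c.threads t (some (tmpl, v, l, cnt + 1)))
          (t ++ [cnt]) (some (k, startF k, l0, 0)),
        mutexes := c.mutexes, globals := c.globals }
  | .localUpd f =>
      { threads := Function.update c.threads t (some (tmpl, v, f l, cnt)),
        mutexes := c.mutexes, globals := c.globals }
  | .read g f =>
      { threads := Function.update c.threads t (some (tmpl, v, f l (c.globals g), cnt)),
        mutexes := c.mutexes, globals := c.globals }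
  | .write g f =>
      { threads := Function.update c.threads t (some (tmpl, v, l, cnt)),
        mutexes := c.mutexes,
        globals := Function.update c.globals g (f l) }
  | _ =>
      { threads := Function.update c.threads t (some (tmpl, v, l, cnt)),
        mutexes := c.mutexes, globals := c.globals }

/-- One consistent step of the interleaving semantics. -/
def Step (P : Prog Node Mutex Global L V) (c : Config Node Mutex Global L V) (t : TID)
    (e : Node × Act Mutex Global L V × Node) (c' : Config Node Mutex Global L V) : Prop :=
  ∃ tmpl l cnt, c.threads t = some (tmpl, e.1, l, cnt) ∧
    P.edges tmpl e.1 e.2.1 e.2.2 ∧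
    admissibleAct c t l cnt e.2.1 ∧
    c' = applyAct P.start P.initLocal c t tmpl e.2.2 l cnt e.2.1

/-- A consistent interleaving of `P`: a sequence of configurations connected by
    admissible thread-labeled steps, starting in the initial state. -/
structure Interleaving (P : Prog Node Mutex Global L V) where
  len : Nat
  states : Fin (len + 1) → Config Node Mutex Global L V
  who : Fin len → TID
  edge : Fin len → Node × Act Mutex Global L V × Node
  init : IsInit P (states 0)
  consistent : ∀ k : Fin len, Step P (states k.castSucc) (who k) (edge k) (states k.succ)

/-- The assertion at step `k` of interleaving `i` is violated. -/
def Interleaving.ViolatesAt {P : Prog Node Mutex Global L V} (i : Interleaving P)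
    (k : Fin i.len) : Prop :=
  ∃ p u v, i.edge k = (u, Act.assert p, v) ∧
    ∃ tmpl l cnt, (i.states k.castSucc).threads (i.who k) = some (tmpl, u, l, cnt) ∧ p l = false

/-- Safety w.r.t. the interleaving semantics. -/
def Safe (P : Prog Node Mutex Global L V) : Prop :=
  ∀ (i : Interleaving P) (k : Fin i.len), ¬ i.ViolatesAt k

/-- Actions of `Lang_Atomic`: base actions, and atomic blocks `atomic{a; rest}` whose
first statement `a` is the only possibly inadmissible one. -/
inductive ActA (Mutex Global L V : Type) : Type where
  | base (a : Act Mutex Global L V)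
  | atomic (a : Act Mutex Global L V) (rest : List (Act Mutex Global L V))

/-- Programs of `Lang_Atomic`. -/
structure ProgA (Node Mutex Global L V : Type) where
  edges : Nat → Node → ActA Mutex Global L V → Node → Prop
  start : Nat → Node
  initLocal : L
  initGlobal : Global → V

/-- Always-admissible statement kinds allowed inside the tail of an atomic block. -/
def Act.Simple : Act Mutex Global L V → Prop
  | .localUpd _ => True
  | .read _ _ => True
  | .write _ _ => True
  | .assert _ => True
  | _ => False

/-- Apply one action of a thread `t` (keeping it at node `v`). -/
def applyOne (startF : Nat → Node) (l0 : L) (c : Config Node Mutex Global L V)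
    (t : TID) (v : Node) (a : Act Mutex Global L V) : Config Node Mutex Global L V :=
  match c.threads t with
  | some (tmpl, _, l, cnt) => applyAct startF l0 c t tmpl v l cnt a
  | none => c

/-- Apply a sequence of actions of thread `t` in one atomic step. -/
def applyList (startF : Nat → Node) (l0 : L) (c : Config Node Mutex Global L V)
    (t : TID) (v : Node) (as_ : List (Act Mutex Global L V)) : Config Node Mutex Global L V :=
  as_.foldl (fun c a => applyOne startF l0 c t v a) c

/-- One step of the interleaving semantics of `Lang_Atomic`; an atomic block is executed
as a whole, and is admissible iff its first statement is. -/
def StepA (P : ProgA Node Mutex Global L V) (c : Config Node Mutex Global L V) (t : TID)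
    (e : Node × ActA Mutex Global L V × Node) (c' : Config Node Mutex Global L V) : Prop :=
  ∃ tmpl l cnt, c.threads t = some (tmpl, e.1, l, cnt) ∧
    P.edges tmpl e.1 e.2.1 e.2.2 ∧
    match e.2.1 with
    | .base a => admissibleAct c t l cnt a ∧
        c' = applyAct P.start P.initLocal c t tmpl e.2.2 l cnt a
    | .atomic a rest => admissibleAct c t l cnt a ∧ (∀ b ∈ rest, b.Simple) ∧
        c' = applyList P.start P.initLocal
              (applyAct P.start P.initLocal c t tmpl e.2.2 l cnt a) t e.2.2 rest

/-- A consistent interleaving of a `Lang_Atomic` program. -/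
structure InterleavingA (P : ProgA Node Mutex Global L V) where
  len : Nat
  states : Fin (len + 1) → Config Node Mutex Global L V
  who : Fin len → TID
  edge : Fin len → Node × ActA Mutex Global L V × Node
  init : IsInitGen P.start P.initLocal P.initGlobal (states 0)
  consistent : ∀ k : Fin len, StepA P (states k.castSucc) (who k) (edge k) (states k.succ)

/-- An assertion (possibly inside an atomic block) is violated at step `k`: it evaluates to
false after executing the preceding statements of the block on the preceding state. -/
def InterleavingA.ViolatesAt {P : ProgA Node Mutex Global L V} (i : InterleavingA P)
    (k : Fin i.len) : Prop :=
  ∃ tmpl l cnt,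
    (i.states k.castSucc).threads (i.who k) = some (tmpl, (i.edge k).1, l, cnt) ∧
    match (i.edge k).2.1 with
    | .base a => ∃ p, a = Act.assert p ∧ p l = false
    | .atomic a rest =>
        (∃ p, a = Act.assert p ∧ p l = false) ∨
        ∃ n p, rest[n]? = some (Act.assert p) ∧
          ∃ tmpl' nd l' cnt',
            ((applyList P.start P.initLocal
                (applyAct P.start P.initLocal (i.states k.castSucc) (i.who k) tmpl
                  (i.edge k).2.2 l cnt a)
                (i.who k) (i.edge k).2.2 (rest.take n)).threads (i.who k))
              = some (tmpl', nd, l', cnt') ∧ p l' = false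

/-- Safety of a `Lang_Atomic` program w.r.t. the interleaving semantics. -/
def SafeA (P : ProgA Node Mutex Global L V) : Prop :=
  ∀ (i : InterleavingA P) (k : Fin i.len), ¬ i.ViolatesAt k

variable {GGlobal GLoc : Type} [DecidableEq GGlobal]

/-- Ghost updates: statements over the extended state that only write ghost locals and
ghost globals (reading program and ghost state is allowed). -/
def GhostUpd : Act Mutex (Global ⊕ GGlobal) (L × GLoc) V → Prop
  | .localUpd f => ∀ p, (f p).1 = p.1
  | .read _ f => ∀ p v, (f p v).1 = p.1
  | .write g _ => ∃ gg, g = Sum.inr gg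
  | _ => False

/-- Ghost statements used to evaluate and assert invariants: ghost updates or asserts. -/
def GhostStmt (b : Act Mutex (Global ⊕ GGlobal) (L × GLoc) V) : Prop :=
  GhostUpd b ∨ ∃ p, b = Act.assert p

/-- A ghost witness `(D_g, X_g, U, I)` for `P`: initial values of fresh ghost globals,
initial ghost local state, ghost updates per edge, and location invariants per node
(given as ghost statement sequences evaluating and asserting the invariant). -/
structure Witness (P : Prog Node Mutex Global L V) (GGlobal GLoc : Type) where
  ginit : GGlobal → V
  glinit : GLoc
  upd : Nat → Node → Node → Option (List (Act Mutex (Global ⊕ GGlobal) (L × GLoc) V))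
  inv : Node → Option (List (Act Mutex (Global ⊕ GGlobal) (L × GLoc) V))

/-- Well-formedness: ghost updates only modify ghost variables; invariant code consists of
ghost statements. -/
def Witness.WF {P : Prog Node Mutex Global L V} (W : Witness P GGlobal GLoc) : Prop :=
  (∀ tmpl u v us, W.upd tmpl u v = some us → ∀ b ∈ us, GhostUpd (GLoc := GLoc) b) ∧
  (∀ u bs, W.inv u = some bs → ∀ b ∈ bs, GhostStmt (GLoc := GLoc) b)

/-- Lift a program action to the extended (ghost-instrumented) state spaces. -/
def liftAct : Act Mutex Global L V → Act Mutex (Global ⊕ GGlobal) (L × GLoc) V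
  | .lock m => .lock m
  | .unlock m => .unlock m
  | .create k => .create k
  | .localUpd f => .localUpd (fun p => (f p.1, p.2))
  | .read g f => .read (.inl g) (fun p v => (f p.1 v, p.2))
  | .write g f => .write (.inl g) (fun p => f p.1)
  | .assert p => .assert (fun q => p q.1)
  | .pos c => .pos (fun q => c q.1)
  | .neg c => .neg (fun q => c q.1)

/-- The atomic block evaluating and asserting an invariant. -/
def invAct : List (Act Mutex (Global ⊕ GGlobal) (L × GLoc) V) →
    ActA Mutex (Global ⊕ GGlobal) (L × GLoc) V
  | [] => .atomic (.localUpd id) []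
  | b :: bs => .atomic b bs

/-- `δ_W`: the instrumented action on an edge — the original action fused atomically with
the ghost updates, if any. -/
def deltaAct {P : Prog Node Mutex Global L V} (W : Witness P GGlobal GLoc)
    (tmpl : Nat) (u v : Node) (a : Act Mutex Global L V) :
    ActA Mutex (Global ⊕ GGlobal) (L × GLoc) V :=
  match W.upd tmpl u v with
  | some us => .atomic (liftAct a) us
  | none => .base (liftAct a)

/-- Source node of the instrumented edge: the new node `(u, v)` if `Ψ_W u` is defined. -/
def srcNode {P : Prog Node Mutex Global L V} (W : Witness P GGlobal GLoc)
    (u v : Node) : Node ⊕ (Node × Node) :=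
  if (W.inv u).isSome then .inr (u, v) else .inl u

/-- The witness-instrumented program `P_W`. -/
def instrument (P : Prog Node Mutex Global L V) (W : Witness P GGlobal GLoc) :
    ProgA (Node ⊕ (Node × Node)) Mutex (Global ⊕ GGlobal) (L × GLoc) V where
  edges := fun tmpl n act n' =>
    (∃ u a v, P.edges tmpl u a v ∧ n = srcNode W u v ∧
        act = deltaAct W tmpl u v a ∧ n' = .inl v) ∨
    (∃ u a v bs, P.edges tmpl u a v ∧ W.inv u = some bs ∧
        n = .inl u ∧ act = invAct bs ∧ n' = .inr (u, v))
  start := fun k => .inl (P.start k)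
  initLocal := (P.initLocal, W.glinit)
  initGlobal := Sum.elim P.initGlobal W.ginit

/-- Project an instrumented node back to the original node. -/
def projNode : Node ⊕ (Node × Node) → Node
  | .inl u => u
  | .inr p => p.1

/-- `π_P`: project a configuration of `P_W` back to a configuration of `P` (remove ghost
variables; keep program variables, mutexes and thread locations). -/
def projConfig (c : Config (Node ⊕ (Node × Node)) Mutex (Global ⊕ GGlobal) (L × GLoc) V) :
    Config Node Mutex Global L V where
  threads := fun t => (c.threads t).map (fun e => (e.1, projNode e.2.1, e.2.2.1.1, e.2.2.2))
  mutexes := c.mutexes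
  globals := fun g => c.globals (.inl g)

/-- A step of an instrumented interleaving is an inserted invariant-assertion step. -/
def IsInvStep {P : Prog Node Mutex Global L V} (W : Witness P GGlobal GLoc)
    (e : (Node ⊕ (Node × Node)) × ActA Mutex (Global ⊕ GGlobal) (L × GLoc) V ×
          (Node ⊕ (Node × Node))) : Prop :=
  ∃ u v bs, W.inv u = some bs ∧ e = (.inl u, invAct bs, .inr (u, v))

/-- Globals accessed by a base action. -/
def accessedOne : Act Mutex Global L V → List Global
  | .read g _ => [g]
  | .write g _ => [g]
  | _ => []

/-- Globals accessed by an action of `Lang_Atomic`. -/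
def accessedA : ActA Mutex Global L V → List Global
  | .base a => accessedOne a
  | .atomic a rest => accessedOne a ++ (rest.map accessedOne).flatten

/-- Lift an action to the mutex set extended with the dedicated per-global mutexes. -/
def liftMut : Act Mutex Global L V → Act (Mutex ⊕ Global) Global L V
  | .lock m => .lock (.inl m)
  | .unlock m => .unlock (.inl m)
  | .create k => .create k
  | .localUpd f => .localUpd f
  | .read g f => .read g f
  | .write g f => .write g f
  | .assert p => .assert p
  | .pos c => .pos c
  | .neg c => .neg c

variable [LinearOrder Global]

/-- The sequence of base actions replacing an action of `Lang_Atomic`: the accessed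
globals' dedicated mutexes are locked in the fixed total order, then the body is executed
statement by statement, then the mutexes are released in reverse order. -/
def splitActs (act : ActA Mutex Global L V) : List (Act (Mutex ⊕ Global) Global L V) :=
  let gs := List.insertionSort (· ≤ ·) (accessedA act).dedup
  (gs.map fun g => Act.lock (Sum.inr g)) ++
  (match act with
   | .base a => [liftMut a]
   | .atomic a rest => liftMut a :: rest.map liftMut) ++
  (gs.reverse.map fun g => Act.unlock (Sum.inr g))

/-- Intermediate nodes of the critical-section expansion of an edge `(u, _, v)`. -/
def nodeAt (u v : Node) (n k : Nat) : Node ⊕ (Node × Node × Nat) :=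
  if k = 0 then .inl u else if n ≤ k then .inl v else .inr (u, v, k)

/-- `split P`: atomic blocks (and single global accesses) are encoded as critical sections
protected by the dedicated per-global mutexes, acquired in a fixed total order. -/
def splitProg (Q : ProgA Node Mutex Global L V) :
    Prog (Node ⊕ (Node × Node × Nat)) (Mutex ⊕ Global) Global L V where
  edges := fun tmpl n b n' =>
    ∃ u act v k, Q.edges tmpl u act v ∧
      k < (splitActs act).length ∧
      n = nodeAt u v (splitActs act).length k ∧
      n' = nodeAt u v (splitActs act).length (k + 1) ∧
      (splitActs act)[k]? = some b
  start := fun k => .inl (Q.start k)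
  initLocal := Q.initLocal
  initGlobal := Q.initGlobal

/-- Agreement of a `split`-configuration with an original configuration on globals,
owners of original mutexes, and local states of all threads (`π_split`-erasure). -/
def AgreesSplit (c' : Config (Node ⊕ (Node × Node × Nat)) (Mutex ⊕ Global) Global L V)
    (c : Config Node Mutex Global L V) : Prop :=
  (∀ g, c'.globals g = c.globals g) ∧
  (∀ m : Mutex, c'.mutexes (.inl m) = c.mutexes m) ∧
  (∀ t : TID, (c'.threads t).map (fun e => e.2.2.1) = (c.threads t).map (fun e => e.2.2.1))

/-! ### Auxiliary machinery for `split_preserves_runs` -/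

set_option linter.unusedSectionVars false

section ChainDev
variable {N M G LL VV : Type} [DecidableEq M] [DecidableEq G]

/-- list-based runs -/
def Chain (P : Prog N M G LL VV) :
    Config N M G LL VV → List (TID × (N × Act M G LL VV × N) × Config N M G LL VV) → Prop
  | _, [] => True
  | c, x :: xs => Step P c x.1 x.2.1 x.2.2 ∧ Chain P x.2.2 xs

/-- the final configuration of a run -/
def endC (c : Config N M G LL VV)
    (L : List (TID × (N × Act M G LL VV × N) × Config N M G LL VV)) : Config N M G LL VV :=
  L.foldl (fun _ x => x.2.2) c

@[simp] lemma endC_nil (c : Config N M G LL VV) : endC c ([] : List _) = c := rfl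

@[simp] lemma endC_cons (c : Config N M G LL VV) (x) (L : List _) :
    endC c (x :: L) = endC x.2.2 L := rfl

lemma endC_append (c : Config N M G LL VV) (L1 L2 : List _) :
    endC c (L1 ++ L2) = endC (endC c L1) L2 := by
  simp [endC, List.foldl_append]

lemma chain_append {P : Prog N M G LL VV} {c : Config N M G LL VV} {L1 L2 : List _} :
    Chain P c (L1 ++ L2) ↔ Chain P c L1 ∧ Chain P (endC c L1) L2 := by
  induction L1 generalizing c with
  | nil => simp [Chain]
  | cons x xs ih => simp [Chain, ih, and_assoc]

/-- state after `m` steps -/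
def stateAt (c : Config N M G LL VV)
    (L : List (TID × (N × Act M G LL VV × N) × Config N M G LL VV)) (m : Nat) :
    Config N M G LL VV :=
  endC c (L.take m)

@[simp] lemma stateAt_zero (c : Config N M G LL VV) (L : List _) : stateAt c L 0 = c := rfl

lemma stateAt_succ_of_lt {c : Config N M G LL VV} {L : List _} {m : Nat}
    (h : m < L.length) : stateAt c L (m + 1) = L[m].2.2 := by
  induction L generalizing c m with
  | nil => simp at h
  | cons x xs ih =>
    cases m with
    | zero => simp [stateAt, endC]
    | succ m =>
      have := ih (c := x.2.2) (m := m) (by simpa using h)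
      simpa [stateAt] using this

lemma stateAt_prefix (c : Config N M G LL VV) (L1 L2 : List _) :
    stateAt c (L1 ++ L2) L1.length = endC c L1 := by
  simp [stateAt, List.take_left]

lemma chain_step {P : Prog N M G LL VV} {c : Config N M G LL VV} {L : List _}
    (hC : Chain P c L) : ∀ m (h : m < L.length),
    Step P (stateAt c L m) L[m].1 L[m].2.1 (stateAt c L (m + 1)) := by
  induction L generalizing c with
  | nil => intro m h; simp at h
  | cons x xs ih =>
    intro m h
    cases m with
    | zero =>
      rw [stateAt_succ_of_lt h]
      simpa [stateAt] using hC.1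
    | succ m =>
      have h' : m < xs.length := by simpa using h
      have := ih hC.2 m h'
      have e1 : stateAt c (x :: xs) (m + 1) = stateAt x.2.2 xs m := by simp [stateAt]
      have e2 : stateAt c (x :: xs) (m + 2) = stateAt x.2.2 xs (m + 1) := by simp [stateAt]
      rw [e1, e2]; simpa using this

/-- turn a chain into an `Interleaving` -/
def toInterleaving (P : Prog N M G LL VV) (c0 : Config N M G LL VV)
    (L : List (TID × (N × Act M G LL VV × N) × Config N M G LL VV))
    (h0 : IsInit P c0) (hC : Chain P c0 L) : Interleaving P where
  len := L.length
  states := fun k => stateAt c0 L k.val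
  who := fun k => (L[k.val]'k.isLt).1
  edge := fun k => (L[k.val]'k.isLt).2.1
  init := h0
  consistent := fun k => by
    have := chain_step hC k.val k.isLt
    simpa [Fin.succ, Fin.castSucc] using this

end ChainDev
section LiftDev

lemma Config.ext' {N M G LL VV : Type} {c d : Config N M G LL VV}
    (h1 : c.threads = d.threads) (h2 : c.mutexes = d.mutexes) (h3 : c.globals = d.globals) :
    c = d := by
  cases c; cases d; simp_all

/-- Embed a configuration of the atomic program into a configuration of the split program. -/
def liftConfig (c : Config Node Mutex Global L V) :
    Config (Node ⊕ (Node × Node × Nat)) (Mutex ⊕ Global) Global L V where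
  threads := fun t => (c.threads t).map (fun e => (e.1, Sum.inl e.2.1, e.2.2))
  mutexes := fun m => match m with | .inl m => c.mutexes m | .inr _ => none
  globals := c.globals

@[simp] lemma liftConfig_threads (c : Config Node Mutex Global L V) (t : TID) :
    (liftConfig c).threads t = (c.threads t).map (fun e => (e.1, Sum.inl e.2.1, e.2.2)) := rfl

@[simp] lemma liftConfig_mutexes_inl (c : Config Node Mutex Global L V) (m : Mutex) :
    (liftConfig c).mutexes (.inl m) = c.mutexes m := rfl

@[simp] lemma liftConfig_mutexes_inr (c : Config Node Mutex Global L V) (g : Global) :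
    (liftConfig c).mutexes (.inr g) = none := rfl

@[simp] lemma liftConfig_globals (c : Config Node Mutex Global L V) (g : Global) :
    (liftConfig c).globals g = c.globals g := rfl

lemma lift_applyAct (sF : Nat → Node) (l0 : L) (c : Config Node Mutex Global L V)
    (t : TID) (tmpl : Nat) (v : Node) (l : L) (cnt : Nat) (a : Act Mutex Global L V) :
    liftConfig (applyAct sF l0 c t tmpl v l cnt a)
      = applyAct (fun k => Sum.inl (sF k)) l0 (liftConfig c) t tmpl (Sum.inl v) l cnt
          (liftMut a) := by
  cases a <;>
    refine Config.ext' (funext fun t' => ?_) (funext fun m => ?_) (funext fun g => ?_) <;>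
    first
      | rfl
      | (simp only [liftConfig, applyAct, liftMut, Function.update_apply]
         split_ifs <;> simp_all)
      | (cases m <;> simp only [liftConfig, applyAct, liftMut, Function.update_apply] <;>
         split_ifs <;> simp_all)

lemma lift_applyOne (sF : Nat → Node) (l0 : L) (c : Config Node Mutex Global L V)
    (t : TID) (v : Node) (a : Act Mutex Global L V) :
    liftConfig (applyOne sF l0 c t v a)
      = applyOne (fun k => Sum.inl (sF k)) l0 (liftConfig c) t (Sum.inl v) (liftMut a) := by
  unfold applyOne
  cases h : c.threads t with
  | none => simp [h]
  | some e =>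
    obtain ⟨tmpl, nd, l, cnt⟩ := e
    simp [h, lift_applyAct]

lemma lift_applyList (sF : Nat → Node) (l0 : L) (c : Config Node Mutex Global L V)
    (t : TID) (v : Node) (as_ : List (Act Mutex Global L V)) :
    liftConfig (applyList sF l0 c t v as_)
      = applyList (fun k => Sum.inl (sF k)) l0 (liftConfig c) t (Sum.inl v)
          (as_.map liftMut) := by
  induction as_ generalizing c with
  | nil => rfl
  | cons a as ih => simp [applyList] at *; rw [← lift_applyOne]; exact ih _

lemma lift_admissible (c : Config Node Mutex Global L V) (t : TID) (l : L) (cnt : Nat)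
    (a : Act Mutex Global L V) :
    admissibleAct (liftConfig c) t l cnt (liftMut a) ↔ admissibleAct c t l cnt a := by
  cases a <;> simp [admissibleAct, liftMut]

end LiftDev
section RBDev

/-- Configurations of the split program. -/
abbrev SConf (Node Mutex Global L V : Type) :=
  Config (Node ⊕ (Node × Node × Nat)) (Mutex ⊕ Global) Global L V

/-- Agreement up to the inserted mutexes and the node of thread `t`. -/
def RB' (t : TID) (c d : SConf Node Mutex Global L V) : Prop :=
  (∀ m : Mutex, c.mutexes (.inl m) = d.mutexes (.inl m)) ∧
  (∀ g, c.globals g = d.globals g) ∧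
  (∀ t', t' ≠ t → c.threads t' = d.threads t')

lemma self_ne_append (t : TID) (cnt : Nat) : t ++ [cnt] ≠ t := by
  intro h; simpa using congrArg List.length h

lemma RB'_adm {t : TID} {c d : SConf Node Mutex Global L V}
    (h : RB' t c d) (l : L) (cnt : Nat) (a : Act Mutex Global L V) :
    admissibleAct c t l cnt (liftMut a) ↔ admissibleAct d t l cnt (liftMut a) := by
  cases a <;> simp [admissibleAct, liftMut, h.1 _]
  case create => rw [h.2.2 _ (self_ne_append t cnt)]

lemma RB'_applyAct {t : TID} {c d : SConf Node Mutex Global L V}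
    (sF : Nat → Node ⊕ (Node × Node × Nat)) (l0 : L)
    (h : RB' t c d) {tmpl : Nat} {n1 n2 : Node ⊕ (Node × Node × Nat)} {l : L} {cnt : Nat}
    (hc : c.threads t = some (tmpl, n1, l, cnt)) (hd : d.threads t = some (tmpl, n2, l, cnt))
    (a : Act Mutex Global L V) (v1 v2 : Node ⊕ (Node × Node × Nat)) :
    RB' t (applyAct sF l0 c t tmpl v1 l cnt (liftMut a))
        (applyAct sF l0 d t tmpl v2 l cnt (liftMut a)) ∧
    (∃ l' cnt',
      (applyAct sF l0 c t tmpl v1 l cnt (liftMut a)).threads t = some (tmpl, v1, l', cnt') ∧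
      (applyAct sF l0 d t tmpl v2 l cnt (liftMut a)).threads t = some (tmpl, v2, l', cnt')) ∧
    (∀ g, (applyAct sF l0 c t tmpl v1 l cnt (liftMut a)).mutexes (.inr g)
        = c.mutexes (.inr g)) ∧
    (∀ g, (applyAct sF l0 d t tmpl v2 l cnt (liftMut a)).mutexes (.inr g)
        = d.mutexes (.inr g)) := by
  obtain ⟨hm, hg, ht⟩ := h
  cases a <;>
    refine ⟨⟨fun m => ?_, fun g => ?_, fun t' ht' => ?_⟩, ?_, fun g => ?_, fun g => ?_⟩ <;>
      simp [applyAct, liftMut, Function.update_apply, hm _, hg _] <;>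
      first
        | (split_ifs <;> simp_all)
        | exact ht _ ht'
        | rfl

end RBDev

section NodeAtDev

@[simp] lemma nodeAt_zero (u v : Node) (n : Nat) : nodeAt u v n 0 = .inl u := by
  simp [nodeAt]

lemma nodeAt_last (u v : Node) {n k : Nat} (h : n ≤ k) (h0 : k ≠ 0) :
    nodeAt u v n k = .inl v := by
  simp [nodeAt, h0, h]

end NodeAtDev
section PhaseDev
variable {Q : ProgA Node Mutex Global L V}

lemma mkStep {u v : Node} {act : ActA Mutex Global L V} {tmpl : Nat}
    (hQ : Q.edges tmpl u act v) {j : Nat} {b : Act (Mutex ⊕ Global) Global L V}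
    (hj : (splitActs act)[j]? = some b)
    {c' : SConf Node Mutex Global L V} {t : TID} {l : L} {cnt : Nat}
    (hthr : c'.threads t = some (tmpl, nodeAt u v (splitActs act).length j, l, cnt))
    (hadm : admissibleAct c' t l cnt b) :
    Step (splitProg Q) c' t
      (nodeAt u v (splitActs act).length j, b, nodeAt u v (splitActs act).length (j + 1))
      (applyAct (splitProg Q).start (splitProg Q).initLocal c' t tmpl
        (nodeAt u v (splitActs act).length (j + 1)) l cnt b) := by
  refine ⟨tmpl, l, cnt, hthr, ?_, hadm, rfl⟩
  exact ⟨u, act, v, j, hQ, (List.getElem?_eq_some_iff.mp hj).1, rfl, rfl, hj⟩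

lemma lockPhase {u v : Node} {act : ActA Mutex Global L V} {tmpl : Nat} {t : TID}
    (hQ : Q.edges tmpl u act v) :
    ∀ (gs : List Global) (off : Nat) (c' : SConf Node Mutex Global L V) (l : L) (cnt : Nat),
    (∀ j (hjl : j < gs.length),
        (splitActs act)[off + j]? = some (Act.lock (Sum.inr gs[j]))) →
    gs.Nodup →
    c'.threads t = some (tmpl, nodeAt u v (splitActs act).length off, l, cnt) →
    (∀ g ∈ gs, c'.mutexes (Sum.inr g) = none) →
    ∃ B, Chain (splitProg Q) c' B ∧ B.length = gs.length ∧
      (∀ x ∈ B, x.1 = t ∧ ∃ j : Nat, (splitActs act)[j]? = some x.2.1.2.1) ∧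
      (endC c' B).threads t
        = some (tmpl, nodeAt u v (splitActs act).length (off + gs.length), l, cnt) ∧
      (∀ t', t' ≠ t → (endC c' B).threads t' = c'.threads t') ∧
      (∀ g ∈ gs, (endC c' B).mutexes (Sum.inr g) = some t) ∧
      (∀ m, (∀ g ∈ gs, m ≠ Sum.inr g) → (endC c' B).mutexes m = c'.mutexes m) ∧
      (∀ g, (endC c' B).globals g = c'.globals g) := by
  intro gs
  induction gs with
  | nil =>
    intro off c' l cnt _ _ hthr _
    exact ⟨[], trivial, rfl, by simp, by simpa using hthr, fun _ _ => rfl, by simp,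
      fun m _ => rfl, fun g => rfl⟩
  | cons g gs ih =>
    intro off c' l cnt hspec hnd hthr hmut
    have hj0 : (splitActs act)[off]? = some (Act.lock (Sum.inr g)) := by
      exact hspec 0 (by simp)
    have hadm : admissibleAct c' t l cnt (Act.lock (Sum.inr g)) :=
      hmut g (by simp)
    set c1 := applyAct (splitProg Q).start (splitProg Q).initLocal c' t tmpl
        (nodeAt u v (splitActs act).length (off + 1)) l cnt (Act.lock (Sum.inr g)) with hc1
    have hstep := mkStep hQ hj0 hthr hadm
    have h1thr : c1.threads t
        = some (tmpl, nodeAt u v (splitActs act).length (off + 1), l, cnt) := by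
      simp [hc1, applyAct]
    have h1thr' : ∀ t', t' ≠ t → c1.threads t' = c'.threads t' := by
      intro t' ht'; simp [hc1, applyAct, Function.update_apply, ht']
    have h1mut : ∀ m, m ≠ Sum.inr g → c1.mutexes m = c'.mutexes m := by
      intro m hm; simp [hc1, applyAct, Function.update_apply, hm]
    have h1mutg : c1.mutexes (Sum.inr g) = some t := by simp [hc1, applyAct]
    have h1glob : ∀ g', c1.globals g' = c'.globals g' := fun _ => rfl
    obtain ⟨B, hB, hlen, hwho, hethr, hethr', hemutg, hemut, heglob⟩ :=
      ih (off + 1) c1 l cnt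
        (fun j hjl => by
          have := hspec (j + 1) (by simpa using Nat.succ_lt_succ hjl)
          simpa [Nat.add_comm, Nat.add_assoc, Nat.add_left_comm] using this)
        hnd.of_cons h1thr
        (fun g' hg' => by
          rw [h1mut _ (by simp; rintro rfl; exact (List.nodup_cons.mp hnd).1 hg')]
          exact hmut g' (by simp [hg']))
    refine ⟨(t, (nodeAt u v (splitActs act).length off, Act.lock (Sum.inr g),
        nodeAt u v (splitActs act).length (off + 1)), c1) :: B, ⟨hstep, hB⟩,
      by simp [hlen], ?_, ?_, ?_, ?_, ?_, ?_⟩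
    · intro x hx
      rcases List.mem_cons.mp hx with rfl | hx
      · exact ⟨rfl, off, hj0⟩
      · exact hwho x hx
    · simpa [Nat.add_comm, Nat.add_assoc, Nat.add_left_comm] using hethr
    · intro t' ht'; rw [endC_cons, hethr' t' ht', h1thr' t' ht']
    · intro g' hg'
      rcases List.mem_cons.mp hg' with rfl | hg'
      · rw [endC_cons, hemut _ (fun g'' hg'' => by
          simp; rintro rfl; exact (List.nodup_cons.mp hnd).1 hg''), h1mutg]
      · exact hemutg g' hg'
    · intro m hm
      rw [endC_cons, hemut m (fun g'' hg'' => hm g'' (by simp [hg''])),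
        h1mut m (hm g (by simp))]
    · intro g'; rw [endC_cons, heglob, h1glob]

lemma unlockPhase {u v : Node} {act : ActA Mutex Global L V} {tmpl : Nat} {t : TID}
    (hQ : Q.edges tmpl u act v) :
    ∀ (gs : List Global) (off : Nat) (c' : SConf Node Mutex Global L V) (l : L) (cnt : Nat),
    (∀ j (hjl : j < gs.length),
        (splitActs act)[off + j]? = some (Act.unlock (Sum.inr gs[j]))) →
    gs.Nodup →
    c'.threads t = some (tmpl, nodeAt u v (splitActs act).length off, l, cnt) →
    (∀ g ∈ gs, c'.mutexes (Sum.inr g) = some t) →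
    ∃ B, Chain (splitProg Q) c' B ∧ B.length = gs.length ∧
      (∀ x ∈ B, x.1 = t ∧ ∃ j : Nat, (splitActs act)[j]? = some x.2.1.2.1) ∧
      (endC c' B).threads t
        = some (tmpl, nodeAt u v (splitActs act).length (off + gs.length), l, cnt) ∧
      (∀ t', t' ≠ t → (endC c' B).threads t' = c'.threads t') ∧
      (∀ g ∈ gs, (endC c' B).mutexes (Sum.inr g) = none) ∧
      (∀ m, (∀ g ∈ gs, m ≠ Sum.inr g) → (endC c' B).mutexes m = c'.mutexes m) ∧
      (∀ g, (endC c' B).globals g = c'.globals g) := by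
  intro gs
  induction gs with
  | nil =>
    intro off c' l cnt _ _ hthr _
    exact ⟨[], trivial, rfl, by simp, by simpa using hthr, fun _ _ => rfl, by simp,
      fun m _ => rfl, fun g => rfl⟩
  | cons g gs ih =>
    intro off c' l cnt hspec hnd hthr hmut
    have hj0 : (splitActs act)[off]? = some (Act.unlock (Sum.inr g)) := by
      exact hspec 0 (by simp)
    have hadm : admissibleAct c' t l cnt (Act.unlock (Sum.inr g)) :=
      hmut g (by simp)
    set c1 := applyAct (splitProg Q).start (splitProg Q).initLocal c' t tmpl
        (nodeAt u v (splitActs act).length (off + 1)) l cnt (Act.unlock (Sum.inr g)) with hc1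
    have hstep := mkStep hQ hj0 hthr hadm
    have h1thr : c1.threads t
        = some (tmpl, nodeAt u v (splitActs act).length (off + 1), l, cnt) := by
      simp [hc1, applyAct]
    have h1thr' : ∀ t', t' ≠ t → c1.threads t' = c'.threads t' := by
      intro t' ht'; simp [hc1, applyAct, Function.update_apply, ht']
    have h1mut : ∀ m, m ≠ Sum.inr g → c1.mutexes m = c'.mutexes m := by
      intro m hm; simp [hc1, applyAct, Function.update_apply, hm]
    have h1mutg : c1.mutexes (Sum.inr g) = none := by simp [hc1, applyAct]
    have h1glob : ∀ g', c1.globals g' = c'.globals g' := fun _ => rfl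
    obtain ⟨B, hB, hlen, hwho, hethr, hethr', hemutg, hemut, heglob⟩ :=
      ih (off + 1) c1 l cnt
        (fun j hjl => by
          have := hspec (j + 1) (by simpa using Nat.succ_lt_succ hjl)
          simpa [Nat.add_comm, Nat.add_assoc, Nat.add_left_comm] using this)
        hnd.of_cons h1thr
        (fun g' hg' => by
          rw [h1mut _ (by simp; rintro rfl; exact (List.nodup_cons.mp hnd).1 hg')]
          exact hmut g' (by simp [hg']))
    refine ⟨(t, (nodeAt u v (splitActs act).length off, Act.unlock (Sum.inr g),
        nodeAt u v (splitActs act).length (off + 1)), c1) :: B, ⟨hstep, hB⟩,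
      by simp [hlen], ?_, ?_, ?_, ?_, ?_, ?_⟩
    · intro x hx
      rcases List.mem_cons.mp hx with rfl | hx
      · exact ⟨rfl, off, hj0⟩
      · exact hwho x hx
    · simpa [Nat.add_comm, Nat.add_assoc, Nat.add_left_comm] using hethr
    · intro t' ht'; rw [endC_cons, hethr' t' ht', h1thr' t' ht']
    · intro g' hg'
      rcases List.mem_cons.mp hg' with rfl | hg'
      · rw [endC_cons, hemut _ (fun g'' hg'' => by
          simp; rintro rfl; exact (List.nodup_cons.mp hnd).1 hg''), h1mutg]
      · exact hemutg g' hg'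
    · intro m hm
      rw [endC_cons, hemut m (fun g'' hg'' => hm g'' (by simp [hg''])),
        h1mut m (hm g (by simp))]
    · intro g'; rw [endC_cons, heglob, h1glob]

end PhaseDev
section BodyDev
variable {Q : ProgA Node Mutex Global L V}

lemma simple_adm {b : Act Mutex Global L V} (hS : b.Simple)
    (c' : SConf Node Mutex Global L V) (t : TID) (l : L) (cnt : Nat) :
    admissibleAct c' t l cnt (liftMut b) := by
  cases b <;> simp [Act.Simple] at hS <;> trivial

lemma applyOne_eq {c : SConf Node Mutex Global L V} {t : TID} {tmpl : Nat}
    {nd : Node ⊕ (Node × Node × Nat)} {l : L} {cnt : Nat}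
    (h : c.threads t = some (tmpl, nd, l, cnt)) (sF : Nat → Node ⊕ (Node × Node × Nat))
    (l0 : L) (w : Node ⊕ (Node × Node × Nat)) (b : Act (Mutex ⊕ Global) Global L V) :
    applyOne sF l0 c t w b = applyAct sF l0 c t tmpl w l cnt b := by
  simp [applyOne, h]

lemma bodyPhase {u v : Node} {act : ActA Mutex Global L V} {tmpl : Nat} {t : TID}
    (hQ : Q.edges tmpl u act v) :
    ∀ (bs : List (Act Mutex Global L V)) (off : Nat)
      (c' d' : SConf Node Mutex Global L V) (l : L) (cnt : Nat)
      (w : Node ⊕ (Node × Node × Nat)),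
    (∀ j (hjl : j < bs.length), (splitActs act)[off + j]? = some (liftMut bs[j])) →
    (∀ b ∈ bs, b.Simple) →
    RB' t c' d' →
    c'.threads t = some (tmpl, nodeAt u v (splitActs act).length off, l, cnt) →
    d'.threads t = some (tmpl, w, l, cnt) →
    ∃ B, Chain (splitProg Q) c' B ∧ B.length = bs.length ∧
      (∀ x ∈ B, x.1 = t ∧ ∃ j : Nat, (splitActs act)[j]? = some x.2.1.2.1) ∧
      RB' t (endC c' B)
        (applyList (splitProg Q).start (splitProg Q).initLocal d' t w (bs.map liftMut)) ∧
      (∃ l' cnt',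
        (endC c' B).threads t
          = some (tmpl, nodeAt u v (splitActs act).length (off + bs.length), l', cnt') ∧
        (applyList (splitProg Q).start (splitProg Q).initLocal d' t w
            (bs.map liftMut)).threads t = some (tmpl, w, l', cnt')) ∧
      (∀ g, (endC c' B).mutexes (Sum.inr g) = c'.mutexes (Sum.inr g)) := by
  intro bs
  induction bs with
  | nil =>
    intro off c' d' l cnt w _ _ hRB hthr hthrd
    exact ⟨[], trivial, rfl, by simp, hRB, ⟨l, cnt, by simpa using hthr, hthrd⟩,
      fun g => rfl⟩
  | cons b bs ih =>
    intro off c' d' l cnt w hspec hsimp hRB hthr hthrd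
    have hj0 : (splitActs act)[off]? = some (liftMut b) := by exact hspec 0 (by simp)
    have hadm := simple_adm (hsimp b (by simp)) c' t l cnt
    set c1 := applyAct (splitProg Q).start (splitProg Q).initLocal c' t tmpl
        (nodeAt u v (splitActs act).length (off + 1)) l cnt (liftMut b) with hc1
    set d1 := applyAct (splitProg Q).start (splitProg Q).initLocal d' t tmpl
        w l cnt (liftMut b) with hd1
    obtain ⟨hRB1, ⟨l', cnt', hc1t, hd1t⟩, hc1m, hd1m⟩ :=
      RB'_applyAct (splitProg Q).start (splitProg Q).initLocal hRB hthr hthrd b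
        (nodeAt u v (splitActs act).length (off + 1)) w
    have hstep := mkStep hQ hj0 hthr hadm
    obtain ⟨B, hB, hlen, hwho, hRBe, ⟨l'', cnt'', het, hdt⟩, hemut⟩ :=
      ih (off + 1) c1 d1 l' cnt' w
        (fun j hjl => by
          have := hspec (j + 1) (by simpa using Nat.succ_lt_succ hjl)
          simpa [Nat.add_comm, Nat.add_assoc, Nat.add_left_comm] using this)
        (fun b' hb' => hsimp b' (by simp [hb'])) hRB1 hc1t hd1t
    have happ : applyList (splitProg Q).start (splitProg Q).initLocal d' t w
        ((b :: bs).map liftMut)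
        = applyList (splitProg Q).start (splitProg Q).initLocal d1 t w (bs.map liftMut) := by
      simp only [List.map_cons, applyList, List.foldl_cons]
      rw [applyOne_eq hthrd]
    refine ⟨(t, (nodeAt u v (splitActs act).length off, liftMut b,
        nodeAt u v (splitActs act).length (off + 1)), c1) :: B, ⟨hstep, hB⟩,
      by simp [hlen], ?_, ?_, ?_, ?_⟩
    · intro x hx
      rcases List.mem_cons.mp hx with rfl | hx
      · exact ⟨rfl, off, hj0⟩
      · exact hwho x hx
    · rw [happ]; exact hRBe
    · refine ⟨l'', cnt'', ?_, ?_⟩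
      · simpa [Nat.add_comm, Nat.add_assoc, Nat.add_left_comm] using het
      · rw [happ]; exact hdt
    · intro g; rw [endC_cons, hemut, hc1m]

end BodyDev
section BlockDev
variable {Q : ProgA Node Mutex Global L V}

@[simp] lemma splitProg_start : (splitProg Q).start = fun k => Sum.inl (Q.start k) := rfl
@[simp] lemma splitProg_initLocal : (splitProg Q).initLocal = Q.initLocal := rfl

lemma blockCore {u v : Node} {act : ActA Mutex Global L V} {tmpl : Nat} {t : TID}
    {c d : Config Node Mutex Global L V} {l : L} {cnt : Nat}
    (hQ : Q.edges tmpl u act v)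
    (a : Act Mutex Global L V) (rest : List (Act Mutex Global L V))
    (hsplit : splitActs act
      = ((accessedA act).dedup.insertionSort (· ≤ ·)).map (fun g => Act.lock (Sum.inr g))
        ++ (liftMut a :: rest.map liftMut)
        ++ ((accessedA act).dedup.insertionSort (· ≤ ·)).reverse.map
            (fun g => Act.unlock (Sum.inr g)))
    (hth : c.threads t = some (tmpl, u, l, cnt))
    (hadm : admissibleAct c t l cnt a)
    (hsimp : ∀ b ∈ rest, b.Simple)
    (hd : liftConfig d
      = applyList (splitProg Q).start (splitProg Q).initLocal (liftConfig c) t (Sum.inl v)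
          ((a :: rest).map liftMut)) :
    ∃ B, B ≠ [] ∧ Chain (splitProg Q) (liftConfig c) B ∧
      endC (liftConfig c) B = liftConfig d ∧
      ∀ x ∈ B, x.1 = t ∧ ∃ j : Nat, (splitActs act)[j]? = some x.2.1.2.1 := by
  set gs : List Global := (accessedA act).dedup.insertionSort (· ≤ ·) with hgs
  set n := (splitActs act).length with hn
  have hnval : n = gs.length + (rest.length + 1) + gs.length := by
    simp [hn, hsplit]; omega
  have hnd : gs.Nodup := ((List.perm_insertionSort _ _).nodup_iff).mpr (List.nodup_dedup _)
  have hAlen : (gs.map (fun g => (Act.lock (Sum.inr g) : Act (Mutex ⊕ Global) Global L V))).length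
      = gs.length := by simp
  -- index specifications
  have lockSpec : ∀ j (hjl : j < gs.length),
      (splitActs act)[0 + j]? = some (Act.lock (Sum.inr gs[j])) := by
    intro j hjl
    rw [hsplit, List.append_assoc, Nat.zero_add,
      List.getElem?_append_left (by simpa using hjl), List.getElem?_map,
      List.getElem?_eq_getElem hjl]
    rfl
  have firstSpec : (splitActs act)[gs.length]? = some (liftMut a) := by
    rw [hsplit, List.append_assoc, List.getElem?_append_right (by simp)]
    simp
  have bodySpec : ∀ j (hjl : j < rest.length),
      (splitActs act)[(gs.length + 1) + j]? = some (liftMut rest[j]) := by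
    intro j hjl
    rw [hsplit, List.append_assoc,
      List.getElem?_append_right (by simp; omega)]
    have h1 : gs.length + 1 + j - (gs.map
        (fun g => (Act.lock (Sum.inr g) : Act (Mutex ⊕ Global) Global L V))).length = j + 1 := by
      simp; omega
    rw [h1]
    rw [List.cons_append, List.getElem?_cons_succ,
      List.getElem?_append_left (by simpa using hjl), List.getElem?_map,
      List.getElem?_eq_getElem hjl]
    rfl
  have unlockSpec : ∀ j (hjl : j < gs.reverse.length),
      (splitActs act)[(gs.length + 1 + rest.length) + j]?
        = some (Act.unlock (Sum.inr gs.reverse[j])) := by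
    intro j hjl
    rw [hsplit, List.getElem?_append_right (by simp; omega)]
    have h1 : gs.length + 1 + rest.length + j
        - ((gs.map (fun g => (Act.lock (Sum.inr g) : Act (Mutex ⊕ Global) Global L V)))
            ++ (liftMut a :: rest.map liftMut)).length = j := by
      simp; omega
    rw [h1, List.getElem?_map, List.getElem?_eq_getElem hjl]
    rfl
  -- lock phase
  have hth0 : (liftConfig c).threads t = some (tmpl, Sum.inl u, l, cnt) := by
    rw [liftConfig_threads, hth]; rfl
  have hthn : (liftConfig c).threads t = some (tmpl, nodeAt u v n 0, l, cnt) := by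
    rw [nodeAt_zero]; exact hth0
  obtain ⟨BL, hBL, hBLlen, hBLwho, hLt, hLt', hLmutg, hLmut, hLglob⟩ :=
    lockPhase (t := t) hQ gs 0 (liftConfig c) l cnt lockSpec hnd hthn (fun g _ => rfl)
  set cL := endC (liftConfig c) BL with hcL
  have hLthr : cL.threads t = some (tmpl, nodeAt u v n gs.length, l, cnt) := by
    simpa using hLt
  -- the main action
  have hRBL : RB' t cL (liftConfig c) :=
    ⟨fun m => hLmut _ (fun g _ => by simp), hLglob, hLt'⟩
  have hadmL : admissibleAct cL t l cnt (liftMut a) :=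
    (RB'_adm hRBL l cnt a).mpr ((lift_admissible c t l cnt a).mpr hadm)
  set c1 := applyAct (splitProg Q).start (splitProg Q).initLocal cL t tmpl
      (nodeAt u v n (gs.length + 1)) l cnt (liftMut a) with hc1
  set d1 := applyAct (splitProg Q).start (splitProg Q).initLocal (liftConfig c) t tmpl
      (Sum.inl v) l cnt (liftMut a) with hd1
  have hstep1 := mkStep hQ firstSpec hLthr hadmL
  obtain ⟨hRB1, ⟨l', cnt', hc1t, hd1t⟩, hc1m, hd1m⟩ :=
    RB'_applyAct (splitProg Q).start (splitProg Q).initLocal hRBL hLthr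
      hth0 a (nodeAt u v n (gs.length + 1)) (Sum.inl v)
  -- body phase
  obtain ⟨BB, hBB, hBBlen, hBBwho, hRBB, ⟨l'', cnt'', hBt, hDt⟩, hBmut⟩ :=
    bodyPhase (t := t) hQ rest (gs.length + 1) c1 d1 l' cnt' (Sum.inl v)
      bodySpec hsimp hRB1 hc1t hd1t
  set cB := endC c1 BB with hcB
  set DB := applyList (splitProg Q).start (splitProg Q).initLocal d1 t (Sum.inl v)
      (rest.map liftMut) with hDB
  have hdDB : liftConfig d = DB := by
    rw [hd, hDB, hd1]
    simp only [List.map_cons, applyList, List.foldl_cons]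
    rw [applyOne_eq hth0]
  -- unlock phase
  have hBthr : cB.threads t
      = some (tmpl, nodeAt u v n (gs.length + 1 + rest.length), l'', cnt'') := by
    simpa [Nat.add_assoc] using hBt
  obtain ⟨BU, hBU, hBUlen, hBUwho, hUt, hUt', hUmutg, hUmut, hUglob⟩ :=
    unlockPhase (t := t) hQ gs.reverse (gs.length + 1 + rest.length) cB l'' cnt''
      unlockSpec (by simpa using hnd) hBthr
      (fun g hg => by
        rw [hBmut, hc1m, hLmutg g (by simpa using hg)])
  set cF := endC cB BU with hcF
  have hrev : gs.reverse.length = gs.length := by simp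
  have hkn : n ≤ gs.length + 1 + rest.length + gs.reverse.length := by
    rw [hnval, hrev]; omega
  have hk0 : gs.length + 1 + rest.length + gs.reverse.length ≠ 0 := by omega
  have hFt : cF.threads t = some (tmpl, Sum.inl v, l'', cnt'') := by
    rw [hUt, nodeAt_last u v hkn hk0]
  -- final configuration
  have hfin : cF = liftConfig d := by
    rw [hdDB]
    refine Config.ext' (funext fun t' => ?_) (funext fun m => ?_) (funext fun g => ?_)
    · by_cases ht' : t' = t
      · subst ht'; rw [hFt, hDt]
      · rw [hUt' t' ht', hRBB.2.2 t' ht']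
    · cases m with
      | inl m =>
        rw [hUmut _ (fun g _ => by simp), hRBB.1]
      | inr g =>
        have hDBg : DB.mutexes (Sum.inr g) = none := by
          rw [← hdDB]; rfl
        rw [hDBg]
        by_cases hg : g ∈ gs
        · exact hUmutg _ (by simpa using hg)
        · rw [hUmut _ (fun g' hg' => by
              simp; rintro rfl; exact hg (by simpa using hg')),
            hBmut, hc1m, hLmut _ (fun g' hg' => by
              simp; rintro rfl; exact hg hg')]
          rfl
    · rw [hUglob, hRBB.2.1]
  -- assemble
  refine ⟨BL ++ ((t, (nodeAt u v n gs.length, liftMut a, nodeAt u v n (gs.length + 1)), c1)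
      :: (BB ++ BU)), by simp, ?_, ?_, ?_⟩
  · rw [chain_append]
    refine ⟨hBL, hstep1, ?_⟩
    rw [chain_append]
    exact ⟨hBB, hBU⟩
  · rw [endC_append, endC_cons, endC_append]
    exact hfin
  · intro x hx
    rcases List.mem_append.mp hx with hx | hx
    · exact hBLwho x hx
    · rcases List.mem_cons.mp hx with rfl | hx
      · exact ⟨rfl, gs.length, firstSpec⟩
      · rcases List.mem_append.mp hx with hx | hx
        · exact hBBwho x hx
        · exact hBUwho x hx

lemma blockStep {c d : Config Node Mutex Global L V} {t : TID}
    {e : Node × ActA Mutex Global L V × Node} (hstep : StepA Q c t e d) :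
    ∃ B, B ≠ [] ∧ Chain (splitProg Q) (liftConfig c) B ∧
      endC (liftConfig c) B = liftConfig d ∧
      ∀ x ∈ B, x.1 = t ∧ ∃ j : Nat, (splitActs e.2.1)[j]? = some x.2.1.2.1 := by
  obtain ⟨u, act, v⟩ := e
  obtain ⟨tmpl, l, cnt, hth, hQ, hmatch⟩ := hstep
  have hth0 : (liftConfig c).threads t = some (tmpl, Sum.inl u, l, cnt) := by simp [hth]
  cases act with
  | base a =>
    obtain ⟨hadm, hdd⟩ := hmatch
    refine blockCore hQ a [] rfl hth hadm (by simp) ?_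
    rw [hdd, lift_applyAct]
    simp only [List.map_cons, List.map_nil, applyList, List.foldl_cons, List.foldl_nil]
    rw [applyOne_eq hth0]
    simp only [splitProg_start, splitProg_initLocal]
  | atomic a rest =>
    obtain ⟨hadm, hsimp, hdd⟩ := hmatch
    refine blockCore hQ a rest rfl hth hadm hsimp ?_
    rw [hdd, lift_applyList, lift_applyAct]
    simp only [List.map_cons, applyList, List.foldl_cons]
    rw [applyOne_eq hth0]
    simp only [splitProg_start, splitProg_initLocal]

end BlockDev
section BuildDev
variable {α : Type*} {nn : Nat}

/-- concatenation of the first `N` blocks -/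
def buildL (Block : Fin nn → List α) : Nat → List α
  | 0 => []
  | s + 1 => buildL Block s ++ (if h : s < nn then Block ⟨s, h⟩ else [])

lemma buildL_succ (Block : Fin nn → List α) (s : Nat) (h : s < nn) :
    buildL Block (s + 1) = buildL Block s ++ Block ⟨s, h⟩ := by
  rw [buildL, dif_pos h]

lemma buildL_prefix (Block : Fin nn → List α) {a b : Nat} (h : a ≤ b) :
    buildL Block a <+: buildL Block b := by
  induction b with
  | zero => rw [Nat.le_zero.mp h]
  | succ b ih =>
    rcases Nat.eq_or_lt_of_le h with rfl | h'
    · exact List.prefix_refl _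
    · exact (ih (Nat.lt_succ_iff.mp h')).trans ⟨_, by rw [buildL]⟩

lemma buildL_get (Block : Fin nn → List α) : ∀ (N m : Nat) (h : m < (buildL Block N).length),
    ∃ (s : Nat) (hs : s < nn),
      (buildL Block s).length ≤ m ∧ m < (buildL Block (s + 1)).length ∧
      (buildL Block N)[m] ∈ Block ⟨s, hs⟩ := by
  intro N
  induction N with
  | zero => intro m h; simp [buildL] at h
  | succ N ih =>
    intro m h
    have hb : buildL Block (N + 1)
        = buildL Block N ++ (if h : N < nn then Block ⟨N, h⟩ else []) := by rw [buildL]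
    by_cases hm : m < (buildL Block N).length
    · obtain ⟨s, hs, h1, h2, h3⟩ := ih m hm
      refine ⟨s, hs, h1, h2, ?_⟩
      have e : (buildL Block (N + 1))[m]? = (buildL Block N)[m]? := by
        rw [hb, List.getElem?_append_left hm]
      have e2 : (buildL Block (N + 1))[m]'h = (buildL Block N)[m]'hm := by
        have := (List.getElem?_eq_getElem h).symm.trans
          (e.trans (List.getElem?_eq_getElem hm))
        exact Option.some.inj this
      rw [e2]; exact h3
    · push_neg at hm
      have hN : N < nn := by
        by_contra hN
        rw [hb, dif_neg hN] at h; simp at h; omega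
      refine ⟨N, hN, hm, h, ?_⟩
      have e : (buildL Block (N + 1))[m]?
          = (Block ⟨N, hN⟩)[m - (buildL Block N).length]? := by
        rw [hb, dif_pos hN, List.getElem?_append_right hm]
      have h5 : (Block ⟨N, hN⟩)[m - (buildL Block N).length]?
          = some ((buildL Block (N + 1))[m]'h) := by
        rw [← e, List.getElem?_eq_getElem h]
      exact List.mem_of_getElem? h5

end BuildDev

section FinalDev

lemma agrees_lift (c : Config Node Mutex Global L V) : AgreesSplit (liftConfig c) c :=
  ⟨fun _ => rfl, fun _ => rfl, fun t => by cases h : c.threads t <;> simp [h]⟩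

end FinalDev
/-- Encoding atomic blocks by critical sections preserves runs: for any
consistent interleaving `i` of a `Lang_Atomic` program `Q`, there is a consistent
interleaving `i'` of `split Q` such that, after erasing the inserted lock/unlock steps of
the dedicated mutexes `m_g` and erasing those mutexes from states, `i'` yields an
interleaving whose state at every index agrees with that of `i` on globals, mutex owners,
and local states of all threads. -/
theorem split_preserves_runs (Q : ProgA Node Mutex Global L V) (i : InterleavingA Q) :
    ∃ (i' : Interleaving (splitProg Q)) (θ : Fin (i.len + 1) → Fin (i'.len + 1)),
      StrictMono θ ∧ θ 0 = 0 ∧ θ (Fin.last i.len) = Fin.last i'.len ∧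
      (∀ s : Fin (i.len + 1), AgreesSplit (i'.states (θ s)) (i.states s)) ∧
      (∀ k' : Fin i'.len,
        (∃ g : Global, (i'.edge k').2.1 = Act.lock (Sum.inr g) ∨
            (i'.edge k').2.1 = Act.unlock (Sum.inr g)) ∨
        (∃ s : Fin i.len, i'.who k' = i.who s ∧
            ∃ j : Nat, (splitActs (i.edge s).2.1)[j]? = some (i'.edge k').2.1)) ∧
      (∀ (s : Fin i.len) (k' : Fin i'.len),
        (θ s.castSucc).val ≤ k'.val → k'.val < (θ s.succ).val → i'.who k' = i.who s) := by
  classical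
  have hB : ∀ s : Fin i.len, ∃ B, B ≠ [] ∧
      Chain (splitProg Q) (liftConfig (i.states s.castSucc)) B ∧
      endC (liftConfig (i.states s.castSucc)) B = liftConfig (i.states s.succ) ∧
      ∀ x ∈ B, x.1 = i.who s ∧
        ∃ j : Nat, (splitActs (i.edge s).2.1)[j]? = some x.2.1.2.1 :=
    fun s => blockStep (i.consistent s)
  choose Block hne hch hend hwa using hB
  set C0 := liftConfig (i.states 0) with hC0
  set L := buildL Block i.len with hL
  have hmono : ∀ a b : Nat, a ≤ b →
      (buildL Block a).length ≤ (buildL Block b).length :=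
    fun a b h => (buildL_prefix Block h).length_le
  have H1 : ∀ s (hs : s ≤ i.len),
      Chain (splitProg Q) C0 (buildL Block s) ∧
      endC C0 (buildL Block s) = liftConfig (i.states ⟨s, Nat.lt_succ_of_le hs⟩) := by
    intro s
    induction s with
    | zero =>
      intro _
      refine ⟨trivial, ?_⟩
      have h0 : (⟨0, Nat.lt_succ_of_le (Nat.zero_le _)⟩ : Fin (i.len + 1)) = 0 := by
        apply Fin.ext; simp
      rw [show (buildL Block 0 : List _) = [] from rfl, endC_nil, h0]
    | succ s ih =>
      intro hs
      have hs' : s < i.len := hs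
      obtain ⟨hc, he⟩ := ih (Nat.le_of_lt hs')
      rw [buildL_succ Block s hs']
      constructor
      · rw [chain_append, he]
        exact ⟨hc, hch ⟨s, hs'⟩⟩
      · rw [endC_append, he]
        exact hend ⟨s, hs'⟩
  have hchain : Chain (splitProg Q) C0 L := (H1 i.len (le_refl _)).1
  have hinit : IsInit (splitProg Q) C0 := by
    obtain ⟨h1, h2, h3⟩ := i.init
    refine ⟨fun t => ?_, fun m => ?_, fun g => ?_⟩
    · rw [hC0, liftConfig_threads, h1 t]
      by_cases ht : t = ([] : TID) <;> simp [ht] <;> rfl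
    · cases m with
      | inl m => rw [hC0, liftConfig_mutexes_inl]; exact h2 m
      | inr g => rfl
    · rw [hC0, liftConfig_globals]; exact h3 g
  have hlen : ∀ s : Fin (i.len + 1), (buildL Block s.val).length < L.length + 1 :=
    fun s => Nat.lt_succ_of_le (hmono _ _ (Nat.le_of_lt_succ s.isLt))
  refine ⟨toInterleaving (splitProg Q) C0 L hinit hchain,
    fun s => ⟨(buildL Block s.val).length, hlen s⟩, ?_, ?_, ?_, ?_, ?_, ?_⟩
  · -- StrictMono
    intro a b hab
    have hbv : b.val ≤ i.len := Nat.lt_succ_iff.mp b.isLt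
    have hav : a.val < i.len := lt_of_lt_of_le hab hbv
    have h1 := hmono (a.val + 1) b.val hab
    rw [buildL_succ Block a.val hav, List.length_append] at h1
    have hpos : 0 < (Block ⟨a.val, hav⟩).length := List.length_pos_iff.mpr (hne _)
    exact Fin.mk_lt_mk.mpr (by omega)
  · apply Fin.ext; simp [buildL]
  · apply Fin.ext; rfl
  · -- agreement
    intro s
    obtain ⟨T, hT⟩ := buildL_prefix Block (b := i.len) (Nat.le_of_lt_succ s.isLt)
    have hT' : buildL Block s.val ++ T = L := hT
    show AgreesSplit (stateAt C0 L (buildL Block s.val).length) (i.states s)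
    rw [← hT', stateAt_prefix, (H1 s.val (Nat.le_of_lt_succ s.isLt)).2]
    have hss : (⟨s.val, Nat.lt_succ_of_le (Nat.le_of_lt_succ s.isLt)⟩ : Fin (i.len + 1))
        = s := Fin.ext rfl
    rw [hss]
    exact agrees_lift _
  · -- actions come from splitActs
    intro k'
    right
    obtain ⟨s, hs, h1, h2, h3⟩ := buildL_get Block i.len k'.val k'.isLt
    exact ⟨⟨s, hs⟩, (hwa ⟨s, hs⟩ _ h3).1, (hwa ⟨s, hs⟩ _ h3).2⟩
  · -- who within a block
    intro s k' hle hlt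
    obtain ⟨s', hs', h1, h2, h3⟩ := buildL_get Block i.len k'.val k'.isLt
    have hle' : (buildL Block s.val).length ≤ k'.val := by simpa using hle
    have hlt' : k'.val < (buildL Block (s.val + 1)).length := by simpa using hlt
    have hsv : s' = s.val := by
      rcases lt_trichotomy s' s.val with h | h | h
      · have := hmono (s' + 1) s.val h
        omega
      · exact h
      · have := hmono (s.val + 1) s' h
        omega
    have hfe : (⟨s', hs'⟩ : Fin i.len) = s := Fin.ext hsv
    rw [hfe] at h3
    exact (hwa s _ h3).1
end CW
end

section
/- The per-thread projection used in the coincidence construction is well-defined: given a consistent interleaving i and a thread t, fusing each pair of consecutive states (target of one t-step, source of the next t-step) is legitimate because these states agree on t's control location and local state, yielding a unique sequence of local configurations of t. -/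
namespace CW

variable {Node Mutex Global L V : Type}

variable [DecidableEq Mutex] [DecidableEq Global]

/-- A step by another thread preserves `t`'s entry (if `t` exists). -/
theorem step_preserves_other {P : Prog Node Mutex Global L V}
    {c c' : Config Node Mutex Global L V} {t t' : TID} {e}
    (h : Step P c t' e c') (hne : t' ≠ t) {x} (hx : c.threads t = some x) :
    c'.threads t = some x := by
  obtain ⟨tmpl, l, cnt, hth, hedge, hadm, rfl⟩ := h
  obtain ⟨u, a, v⟩ := e
  have hne' : t ≠ t' := Ne.symm hne
  cases a with
  | create k =>
      simp only [admissibleAct] at hadm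
      have h1 : t ≠ t' ++ [cnt] := by
        intro hEq
        rw [← hEq] at hadm
        rw [hadm] at hx
        cases hx
      simp only [applyAct]
      rw [Function.update_of_ne h1, Function.update_of_ne hne', hx]
  | lock m => simp only [applyAct]; rw [Function.update_of_ne hne', hx]
  | unlock m => simp only [applyAct]; rw [Function.update_of_ne hne', hx]
  | localUpd f => simp only [applyAct]; rw [Function.update_of_ne hne', hx]
  | read g f => simp only [applyAct]; rw [Function.update_of_ne hne', hx]
  | write g f => simp only [applyAct]; rw [Function.update_of_ne hne', hx]
  | assert p => simp only [applyAct]; rw [Function.update_of_ne hne', hx]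
  | pos p => simp only [applyAct]; rw [Function.update_of_ne hne', hx]
  | neg p => simp only [applyAct]; rw [Function.update_of_ne hne', hx]

/-- After a step by `t`, thread `t` exists. -/
theorem step_self_some {P : Prog Node Mutex Global L V}
    {c c' : Config Node Mutex Global L V} {t : TID} {e}
    (h : Step P c t e c') : ∃ x, c'.threads t = some x := by
  obtain ⟨tmpl, l, cnt, hth, hedge, hadm, rfl⟩ := h
  obtain ⟨u, a, v⟩ := e
  cases a with
  | create k =>
      have h1 : t ≠ t ++ [cnt] := by simp
      refine ⟨(tmpl, v, l, cnt + 1), ?_⟩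
      simp only [applyAct]
      rw [Function.update_of_ne h1, Function.update_self]
  | lock m => exact ⟨(tmpl, v, l, cnt), by simp only [applyAct]; rw [Function.update_self]⟩
  | unlock m => exact ⟨(tmpl, v, l, cnt), by simp only [applyAct]; rw [Function.update_self]⟩
  | localUpd f => exact ⟨(tmpl, v, f l, cnt), by simp only [applyAct]; rw [Function.update_self]⟩
  | read g f => exact ⟨(tmpl, v, f l (c.globals g), cnt), by simp only [applyAct]; rw [Function.update_self]⟩
  | write g f => exact ⟨(tmpl, v, l, cnt), by simp only [applyAct]; rw [Function.update_self]⟩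
  | assert p => exact ⟨(tmpl, v, l, cnt), by simp only [applyAct]; rw [Function.update_self]⟩
  | pos p => exact ⟨(tmpl, v, l, cnt), by simp only [applyAct]; rw [Function.update_self]⟩
  | neg p => exact ⟨(tmpl, v, l, cnt), by simp only [applyAct]; rw [Function.update_self]⟩

/-- The per-thread projection used in the coincidence construction is
well-defined: given a consistent interleaving `i` and a thread `t`, fusing each pair of
consecutive states (target of one `t`-step, source of the next `t`-step) is legitimate
because these states agree on `t`'s control location and local state, yielding a unique
sequence of local configurations of `t`. -/
theorem projection_fusion_well_defined (P : Prog Node Mutex Global L V)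
    (i : Interleaving P) (t : TID) (j j' : Fin i.len)
    (hj : i.who j = t) (hj' : i.who j' = t) (hlt : j < j')
    (hconsec : ∀ k : Fin i.len, j < k → k < j' → i.who k ≠ t) :
    (i.states j.succ).threads t = (i.states j'.castSucc).threads t ∧
    ∀ (tmpl tmpl' : Nat) (u u' : Node) (l l' : L) (cnt cnt' : Nat),
      (i.states j.succ).threads t = some (tmpl, u, l, cnt) →
      (i.states j'.castSucc).threads t = some (tmpl', u', l', cnt') →
      u = u' ∧ l = l' := by
  obtain ⟨x, hx⟩ := step_self_some (i.consistent j)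
  rw [hj] at hx
  have key : ∀ m (h1 : j.1 + 1 ≤ m) (h2 : m ≤ j'.1),
      (i.states ⟨m, by omega⟩).threads t = some x := by
    intro m
    induction m with
    | zero => intro h1 h2; omega
    | succ n ih =>
      intro h1 h2
      rcases Nat.lt_or_ge n (j.1 + 1) with hlt' | hge
      · have : n + 1 = j.1 + 1 := by omega
        have hfin : (⟨n + 1, by omega⟩ : Fin (i.len + 1)) = j.succ := by
          apply Fin.ext; simp [this]
        rw [hfin]; exact hx
      · have hn : n < i.len := by omega
        have hwho : i.who ⟨n, hn⟩ ≠ t := by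
          apply hconsec ⟨n, hn⟩
          · exact Fin.lt_def.mpr (by simp; omega)
          · exact Fin.lt_def.mpr (by simp; omega)
        have hprev := ih hge (by omega)
        have hstep := i.consistent ⟨n, hn⟩
        have := step_preserves_other hstep hwho hprev
        exact this
  have hle : j.1 + 1 ≤ j'.1 := hlt
  have h1 : (i.states j.succ).threads t = some x := hx
  have h2 : (i.states j'.castSucc).threads t = some x := by
    have := key j'.1 hle le_rfl
    have hfin : (⟨j'.1, by omega⟩ : Fin (i.len + 1)) = j'.castSucc := rfl
    rwa [hfin] at this
  refine ⟨h1.trans h2.symm, ?_⟩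
  intro tmpl tmpl' u u' l l' cnt cnt' ha hb
  rw [h1] at ha; rw [h2] at hb
  have := ha.symm.trans hb
  cases this
  exact ⟨rfl, rfl⟩
end CW
end
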